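/- Let Y be a 2-connected ladder, π : k[Y] → R_2(Y) the quotient map, j ∈ {1,…,k}, and e ≥ 1. Let P_j be the ideal of k[Y] generated by the variables X_{pq} with (p,q) ∈ Y, p ≤ c_j and q ≤ d_j, and let J = P_j^e. Then for every monomial ideal M of k[Y], the images satisfy π(J) ∩ π(M) = π(J ∩ M) as ideals of R_2(Y); in particular π(J) ∩ π(M) is generated by the images of the least common multiples of the monomial generators of J and of M. -/
import Mathlib


set_option maxHeartbeats 1000000
set_option synthInstance.maxHeartbeats 1000000

open CategoryTheory

namespace LadderDet

/-- The position `p` lies in the `m × n` grid `{1,…,m} × {1,…,n}`. -/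
def InGrid (m n : ℕ) (p : ℕ × ℕ) : Prop :=
  1 ≤ p.1 ∧ p.1 ≤ m ∧ 1 ≤ p.2 ∧ p.2 ≤ n

/-- `Y` is a ladder in the `m × n` grid. -/
def IsLadder (m n : ℕ) (Y : Set (ℕ × ℕ)) : Prop :=
  (∀ p ∈ Y, InGrid m n p) ∧
  ∀ i j p q : ℕ, (i, j) ∈ Y → (p, q) ∈ Y → i ≤ p → j ≤ q → (i, q) ∈ Y ∧ (p, j) ∈ Y

/-- A ladder together with the standard nontriviality assumptions:
`(1,n), (m,1) ∈ Y` and every row and every column of the grid meets `Y`. -/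
def StdLadder (m n : ℕ) (Y : Set (ℕ × ℕ)) : Prop :=
  IsLadder m n Y ∧ (1, n) ∈ Y ∧ (m, 1) ∈ Y ∧
  (∀ i, 1 ≤ i → i ≤ m → ∃ j, (i, j) ∈ Y) ∧
  (∀ j, 1 ≤ j → j ≤ n → ∃ i, (i, j) ∈ Y)

/-- Two positions differ by exactly `1` in exactly one coordinate. -/
def AdjStep (p q : ℕ × ℕ) : Prop :=
  (p.1 = q.1 ∧ (p.2 + 1 = q.2 ∨ q.2 + 1 = p.2)) ∨
  (p.2 = q.2 ∧ (p.1 + 1 = q.1 ∨ q.1 + 1 = p.1))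

/-- There is a path in `Y` from `p` to `q`. -/
def HasPath (Y : Set (ℕ × ℕ)) (p q : ℕ × ℕ) : Prop :=
  p ∈ Y ∧ q ∈ Y ∧
    Relation.ReflTransGen (fun a b => a ∈ Y ∧ b ∈ Y ∧ AdjStep a b) p q

/-- `Y` is path-connected. -/
def PathConnected (Y : Set (ℕ × ℕ)) : Prop :=
  ∀ p ∈ Y, ∀ q ∈ Y, HasPath Y p q

/-- `M` is (the set of entries of) a `t × t` minor of `Y`. -/
def IsMinor (t : ℕ) (Y : Set (ℕ × ℕ)) (M : Set (ℕ × ℕ)) : Prop :=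
  ∃ r c : Fin t → ℕ, StrictMono r ∧ StrictMono c ∧
    (∀ u v, (r u, c v) ∈ Y) ∧ M = {p | ∃ u v, p = (r u, c v)}

/-- `Y` is `t`-disconnected. -/
def TDisconnected (m n t : ℕ) (Y : Set (ℕ × ℕ)) : Prop :=
  ∃ Z₁ Z₂ : Set (ℕ × ℕ), Z₁.Nonempty ∧ Z₂.Nonempty ∧
    IsLadder m n Z₁ ∧ IsLadder m n Z₂ ∧ Z₁ ∩ Z₂ = ∅ ∧ Z₁ ∪ Z₂ = Y ∧
    ∀ M, IsMinor t Y M → M ⊆ Z₁ ∨ M ⊆ Z₂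

/-- `Y` is `t`-connected. -/
def TConnected (m n t : ℕ) (Y : Set (ℕ × ℕ)) : Prop := ¬ TDisconnected m n t Y

/-- `p` is a lower inside corner of `Y`. -/
def IsLowerCorner (Y : Set (ℕ × ℕ)) (p : ℕ × ℕ) : Prop :=
  p ∈ Y ∧ (p.1 - 1, p.2) ∈ Y ∧ (p.1, p.2 - 1) ∈ Y ∧ (p.1 - 1, p.2 - 1) ∉ Y

/-- `p` is an upper inside corner of `Y`. -/
def IsUpperCorner (Y : Set (ℕ × ℕ)) (p : ℕ × ℕ) : Prop :=
  p ∈ Y ∧ (p.1 + 1, p.2) ∈ Y ∧ (p.1, p.2 + 1) ∈ Y ∧ (p.1 + 1, p.2 + 1) ∉ Y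

/-- `Y` is one-sided: path-connected and with no lower or no upper inside corners. -/
def OneSided (Y : Set (ℕ × ℕ)) : Prop :=
  PathConnected Y ∧
  ((∀ p, ¬ IsLowerCorner Y p) ∨ (∀ p, ¬ IsUpperCorner Y p))

/-- `Y` is two-sided: path-connected with at least one lower and one upper inside corner. -/
def TwoSided (Y : Set (ℕ × ℕ)) : Prop :=
  PathConnected Y ∧ (∃ p, IsLowerCorner Y p) ∧ (∃ p, IsUpperCorner Y p)

section Algebra

variable (k : Type) [Field k]

/-- The `t × t` minor of the generic matrix determined by rows `r` and columns `c`,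
as an element of the polynomial ring `k[Y]`. -/
noncomputable def minorPoly {t : ℕ} {Y : Set (ℕ × ℕ)} (r c : Fin t → ℕ)
    (h : ∀ u v, (r u, c v) ∈ Y) : MvPolynomial Y k :=
  (Matrix.of fun u v : Fin t =>
    (MvPolynomial.X ⟨(r u, c v), h u v⟩ : MvPolynomial Y k)).det

/-- The ideal `I_t(Y) ⊆ k[Y]` generated by all `t × t` minors of `X` lying in `Y`. -/
noncomputable def minorIdeal (t : ℕ) (Y : Set (ℕ × ℕ)) : Ideal (MvPolynomial Y k) :=
  Ideal.span {f | ∃ (r c : Fin t → ℕ) (_ : StrictMono r) (_ : StrictMono c)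
    (h : ∀ u v, (r u, c v) ∈ Y), f = minorPoly k r c h}

/-- The ladder determinantal ring `R_t(Y) = k[Y]/I_t(Y)`. -/
abbrev LadderRing (t : ℕ) (Y : Set (ℕ × ℕ)) : Type :=
  MvPolynomial Y k ⧸ minorIdeal k t Y

/-- The residue `x_{ij}` of the variable `X_{ij}` in `R_t(Y)`. -/
noncomputable def xres (t : ℕ) {Y : Set (ℕ × ℕ)} (p : ℕ × ℕ) (hp : p ∈ Y) :
    LadderRing k t Y :=
  Ideal.Quotient.mk (minorIdeal k t Y) (MvPolynomial.X ⟨p, hp⟩)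

/-- The ideal of `R_2(Y)` generated by the residues of the variables in row `r`
(an ideal of type `𝔮`). -/
noncomputable def rowIdeal (Y : Set (ℕ × ℕ)) (r : ℕ) : Ideal (LadderRing k 2 Y) :=
  Ideal.span {z | ∃ q, ∃ h : (r, q) ∈ Y, z = xres k 2 (r, q) h}

/-- The ideal of `R_2(Y)` generated by the residues of the variables in column `b`
(an ideal of type `𝔮'`). -/
noncomputable def colIdeal (Y : Set (ℕ × ℕ)) (b : ℕ) : Ideal (LadderRing k 2 Y) :=
  Ideal.span {z | ∃ p, ∃ h : (p, b) ∈ Y, z = xres k 2 (p, b) h}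

/-- The ideal `𝔭` of `R_2(Y)` generated by the residues of the variables weakly
northwest of the position `(c, d)`. -/
noncomputable def cornerIdeal (Y : Set (ℕ × ℕ)) (c d : ℕ) : Ideal (LadderRing k 2 Y) :=
  Ideal.span {z | ∃ p q, ∃ h : (p, q) ∈ Y, p ≤ c ∧ q ≤ d ∧ z = xres k 2 (p, q) h}

end Algebra

/-- An ideal of `k[Y]` is a monomial ideal if it is generated by monomials. -/
def IsMonomialIdeal {k : Type} [Field k] {Y : Set (ℕ × ℕ)}
    (M : Ideal (MvPolynomial Y k)) : Prop :=
  ∃ S : Set (Y →₀ ℕ), M = Ideal.span ((fun d => MvPolynomial.monomial d (1 : k)) '' S)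

/-- A finitely generated module `C` over a commutative ring `R` is semidualizing if
the natural homothety map `R → Hom_R(C, C)` is bijective and `Ext^i_R(C, C) = 0` for
all `i ≥ 1`. -/
def IsSemidualizing {R : Type} [CommRing R] (C : ModuleCat.{0} R) : Prop :=
  Module.Finite R C ∧
  Function.Bijective (LinearMap.lsmul R C) ∧
  ∀ i : ℕ, 1 ≤ i →
    Subsingleton (((Ext R (ModuleCat.{0} R) i).obj (Opposite.op C)).obj C)

/-- `C` has finite injective dimension: for some `n`, `Ext^i_R(M, C) = 0` for all
modules `M` and all `i > n`. -/
def HasFiniteInjDim {R : Type} [CommRing R] (C : ModuleCat.{0} R) : Prop :=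
  ∃ n : ℕ, ∀ i : ℕ, n < i → ∀ M : ModuleCat.{0} R,
    Subsingleton (((Ext R (ModuleCat.{0} R) i).obj (Opposite.op M)).obj C)



/-! ### Auxiliary machinery for the proof -/

namespace Aux

open MvPolynomial

variable {k : Type} [Field k] {Y : Set (ℕ × ℕ)}

/-- NW-region weight of an exponent vector: total degree in the variables `X_{pq}`
with `p ≤ c`, `q ≤ d`. -/
def nu (c d : ℕ) (s : Y →₀ ℕ) : ℕ :=
  s.sum fun x m => if x.val.1 ≤ c ∧ x.val.2 ≤ d then m else 0

lemma nu_add (c d : ℕ) (s t : Y →₀ ℕ) : nu c d (s + t) = nu c d s + nu c d t :=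
  Finsupp.sum_add_index' (fun _ => by simp) (fun x m₁ m₂ => by split <;> simp)

lemma nu_single (c d : ℕ) (x : Y) (m : ℕ) :
    nu c d (Finsupp.single x m) = if x.val.1 ≤ c ∧ x.val.2 ≤ d then m else 0 :=
  Finsupp.sum_single_index (by simp)

lemma nu_sub_add (c d : ℕ) {a s : Y →₀ ℕ} (h : a ≤ s) :
    nu c d s = nu c d (s - a) + nu c d a := by
  conv_lhs => rw [← tsub_add_cancel_of_le h]
  exact nu_add c d (s - a) a

/-- Linear filter: keep only the monomials whose exponent satisfies `C`. -/
noncomputable def filt (C : (Y →₀ ℕ) → Prop) [DecidablePred C] (f : MvPolynomial Y k) :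
    MvPolynomial Y k :=
  ∑ s ∈ f.support, if C s then monomial s (coeff s f) else 0

lemma coeff_filt (C : (Y →₀ ℕ) → Prop) [DecidablePred C] (f : MvPolynomial Y k)
    (t : Y →₀ ℕ) : coeff t (filt C f) = if C t then coeff t f else 0 := by
  classical
  unfold filt
  rw [coeff_sum]
  have h1 : ∀ s ∈ f.support,
      coeff t (if C s then monomial s (coeff s f) else 0)
        = if s = t then (if C t then coeff t f else 0) else 0 := by
    intro s _
    rw [apply_ite (coeff t), coeff_monomial, coeff_zero]
    by_cases hst : s = t
    · subst hst; simp
    · simp [hst]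
  rw [Finset.sum_congr rfl h1, Finset.sum_ite_eq' f.support t]
  by_cases ht : t ∈ f.support
  · simp [ht]
  · rw [notMem_support_iff] at ht
    simp [ht]

lemma filt_add (C : (Y →₀ ℕ) → Prop) [DecidablePred C] (f g : MvPolynomial Y k) :
    filt C (f + g) = filt C f + filt C g := by
  apply MvPolynomial.ext
  intro t
  rw [coeff_add, coeff_filt, coeff_filt, coeff_filt, coeff_add]
  split <;> simp

lemma filt_zero (C : (Y →₀ ℕ) → Prop) [DecidablePred C] :
    filt C (0 : MvPolynomial Y k) = 0 := by
  apply MvPolynomial.ext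
  intro t
  rw [coeff_filt]
  split <;> simp

lemma filt_sub (C : (Y →₀ ℕ) → Prop) [DecidablePred C] (f g : MvPolynomial Y k) :
    filt C (f - g) = filt C f - filt C g := by
  apply MvPolynomial.ext
  intro t
  rw [coeff_sub, coeff_filt, coeff_filt, coeff_filt, coeff_sub]
  split <;> simp

lemma filt_eq_self (C : (Y →₀ ℕ) → Prop) [DecidablePred C] (f : MvPolynomial Y k)
    (h : ∀ t, coeff t f ≠ 0 → C t) : filt C f = f := by
  apply MvPolynomial.ext
  intro t
  rw [coeff_filt]
  by_cases hC : C t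
  · simp [hC]
  · simp only [hC, if_false]
    by_contra hne
    exact hC (h t (fun h0 => hne h0.symm))

/-- Filtering a product with a monomial shifts the filter. -/
lemma filt_mul_monomial (c d e : ℕ) (p : MvPolynomial Y k) (a : Y →₀ ℕ) (r : k) :
    filt (fun s => e ≤ nu c d s) (p * monomial a r)
      = filt (fun s => e ≤ nu c d s + nu c d a) p * monomial a r := by
  apply MvPolynomial.ext
  intro t
  rw [coeff_filt, coeff_mul_monomial', coeff_mul_monomial', coeff_filt]
  by_cases hat : a ≤ t
  · simp only [hat, if_true]
    rw [nu_sub_add c d hat]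
    split <;> simp
  · simp [hat]

/-- Monomials of elements of `P` have `nu ≥ 1`. -/
lemma mem_P_supp (c d : ℕ) (f : MvPolynomial Y k)
    (hf : f ∈ Ideal.span {f : MvPolynomial Y k | ∃ p q, ∃ h : (p, q) ∈ Y,
      p ≤ c ∧ q ≤ d ∧ f = X ⟨(p, q), h⟩}) :
    ∀ s, coeff s f ≠ 0 → 1 ≤ nu c d s := by
  classical
  refine Submodule.span_induction ?_ ?_ ?_ ?_ hf
  · rintro g ⟨p, q, h, hpc, hqd, rfl⟩ s hs
    rw [coeff_X'] at hs
    have hseq : Finsupp.single (⟨(p, q), h⟩ : Y) 1 = s := by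
      by_contra hne; simp [hne] at hs
    rw [← hseq, nu_single]
    simp [hpc, hqd]
  · intro s hs; simp at hs
  · intro x y _ _ hx hy s hs
    rw [coeff_add] at hs
    rcases (by by_contra hc; push_neg at hc; simp [hc.1, hc.2] at hs :
      coeff s x ≠ 0 ∨ coeff s y ≠ 0) with h | h
    · exact hx s h
    · exact hy s h
  · intro a x _ hx s hs
    rw [smul_eq_mul, coeff_mul] at hs
    obtain ⟨pr, hpr, hne⟩ := Finset.exists_ne_zero_of_sum_ne_zero hs
    have h2 : coeff pr.2 x ≠ 0 := fun h0 => hne (by simp [h0])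
    have := hx pr.2 h2
    have hsum : pr.1 + pr.2 = s := Finset.HasAntidiagonal.mem_antidiagonal.mp hpr
    rw [← hsum, nu_add]; omega

/-- Monomials of elements of `P ^ e` have `nu ≥ e`. -/
lemma mem_Ppow_supp (c d : ℕ) (P : Ideal (MvPolynomial Y k))
    (hP : P = Ideal.span {f : MvPolynomial Y k | ∃ p q, ∃ h : (p, q) ∈ Y,
      p ≤ c ∧ q ≤ d ∧ f = X ⟨(p, q), h⟩}) (e : ℕ) :
    ∀ f ∈ P ^ e, ∀ s, coeff s f ≠ 0 → e ≤ nu c d s := by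
  induction e with
  | zero => intro f _ s _; exact Nat.zero_le _
  | succ e ih =>
    intro f hf
    rw [pow_succ] at hf
    refine Submodule.mul_induction_on hf ?_ ?_
    · intro x hx y hy s hs
      rw [coeff_mul] at hs
      obtain ⟨pr, hpr, hne⟩ := Finset.exists_ne_zero_of_sum_ne_zero hs
      have h1 : coeff pr.1 x ≠ 0 := fun h0 => hne (by simp [h0])
      have h2 : coeff pr.2 y ≠ 0 := fun h0 => hne (by simp [h0])
      have e1 := ih x hx pr.1 h1
      have e2 := mem_P_supp c d y (hP ▸ hy) pr.2 h2
      have hsum : pr.1 + pr.2 = s := Finset.HasAntidiagonal.mem_antidiagonal.mp hpr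
      rw [← hsum, nu_add]; omega
    · intro x y hx hy s hs
      rw [coeff_add] at hs
      rcases (by by_contra hc; push_neg at hc; simp [hc.1, hc.2] at hs :
        coeff s x ≠ 0 ∨ coeff s y ≠ 0) with h | h
      · exact hx s h
      · exact hy s h

/-- A monomial with `nu ≥ e` lies in `P ^ e`. -/
lemma monomial_mem_Ppow (c d : ℕ) (P : Ideal (MvPolynomial Y k))
    (hP : P = Ideal.span {f : MvPolynomial Y k | ∃ p q, ∃ h : (p, q) ∈ Y,
      p ≤ c ∧ q ≤ d ∧ f = X ⟨(p, q), h⟩}) (e : ℕ) :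
    ∀ (s : Y →₀ ℕ) (r : k), e ≤ nu c d s → monomial s r ∈ P ^ e := by
  induction e with
  | zero => intro s r _; rw [pow_zero, Ideal.one_eq_top]; exact Submodule.mem_top
  | succ e ih =>
    intro s r hs
    have hnz : nu c d s ≠ 0 := by omega
    have : ∃ x ∈ s.support, (if (x : Y).val.1 ≤ c ∧ (x : Y).val.2 ≤ d then s x else 0) ≠ 0 := by
      by_contra hc
      push_neg at hc
      exact hnz (Finset.sum_eq_zero hc)
    obtain ⟨x, _, hx⟩ := this
    have hreg : x.val.1 ≤ c ∧ x.val.2 ≤ d := by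
      by_contra hr; simp [hr] at hx
    have hsx : s x ≠ 0 := by
      intro h0; simp [h0] at hx
    have hle : Finsupp.single x 1 ≤ s := Finsupp.single_le_iff.mpr (Nat.one_le_iff_ne_zero.mpr hsx)
    have hsum : Finsupp.single x 1 + (s - Finsupp.single x 1) = s := add_tsub_cancel_of_le hle
    have hnu' : e ≤ nu c d (s - Finsupp.single x 1) := by
      have h1 := nu_add c d (Finsupp.single x 1) (s - Finsupp.single x 1)
      rw [hsum] at h1
      rw [nu_single] at h1
      simp only [hreg.1, hreg.2, and_self, if_true] at h1
      omega
    have heq : (monomial s r : MvPolynomial Y k)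
        = X x ^ 1 * monomial (s - Finsupp.single x 1) r := by
      rw [← monomial_single_add, hsum]
    rw [heq, pow_one, pow_succ']
    refine Ideal.mul_mem_mul ?_ (ih _ r hnu')
    rw [hP]
    apply Ideal.subset_span
    exact ⟨x.val.1, x.val.2, by rw [Prod.mk.eta]; exact x.2, hreg.1, hreg.2, by congr 1⟩

/-- The filtered part of `f` lies in `P ^ e`. -/
lemma filt_mem_Ppow (c d : ℕ) (P : Ideal (MvPolynomial Y k))
    (hP : P = Ideal.span {f : MvPolynomial Y k | ∃ p q, ∃ h : (p, q) ∈ Y,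
      p ≤ c ∧ q ≤ d ∧ f = X ⟨(p, q), h⟩}) (e : ℕ) (f : MvPolynomial Y k) :
    filt (fun s => e ≤ nu c d s) f ∈ P ^ e := by
  unfold filt
  refine Ideal.sum_mem _ ?_
  intro s _
  by_cases hC : e ≤ nu c d s
  · rw [if_pos hC]
    exact monomial_mem_Ppow c d P hP e s _ hC
  · rw [if_neg hC]
    exact Submodule.zero_mem _

/-- Each monomial term of a member of a monomial ideal is a member. -/
lemma monomial_term_mem (M : Ideal (MvPolynomial Y k))
    (hM : ∃ S : Set (Y →₀ ℕ), M = Ideal.span ((fun d => monomial d (1 : k)) '' S))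
    (f : MvPolynomial Y k) (hf : f ∈ M) (s : Y →₀ ℕ) :
    monomial s (coeff s f) ∈ M := by
  classical
  obtain ⟨S, rfl⟩ := hM
  set M := Ideal.span ((fun d => monomial d (1 : k)) '' S) with hMdef
  have key : ∀ g, g ∈ M → ∀ (p : MvPolynomial Y k) (s : Y →₀ ℕ),
      monomial s (coeff s (p * g)) ∈ M := by
    intro g hg
    refine Submodule.span_induction ?_ ?_ ?_ ?_ hg
    · rintro g' ⟨a, haS, rfl⟩ p s
      rw [coeff_mul_monomial']
      split_ifs with ha
      · have : (monomial s (coeff (s - a) p * 1) : MvPolynomial Y k)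
            = monomial (s - a) (coeff (s - a) p) * monomial a 1 := by
          rw [monomial_mul, tsub_add_cancel_of_le ha]
        rw [this]
        exact Ideal.mul_mem_left _ _ (Ideal.subset_span ⟨a, haS, rfl⟩)
      · rw [monomial_zero]; exact Submodule.zero_mem _
    · intro p s; rw [mul_zero, coeff_zero, monomial_zero]; exact Submodule.zero_mem _
    · intro x y _ _ hx hy p s
      rw [mul_add, coeff_add, map_add]
      exact Submodule.add_mem _ (hx p s) (hy p s)
    · intro a x _ hx p s
      rw [smul_eq_mul, ← mul_assoc]
      exact hx (p * a) s
  have := key f hf 1 s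
  rwa [one_mul] at this

/-- The filtered part of a member of a monomial ideal is a member. -/
lemma filt_mem_monomialIdeal (C : (Y →₀ ℕ) → Prop) [DecidablePred C]
    (M : Ideal (MvPolynomial Y k))
    (hM : ∃ S : Set (Y →₀ ℕ), M = Ideal.span ((fun d => monomial d (1 : k)) '' S))
    (f : MvPolynomial Y k) (hf : f ∈ M) : filt C f ∈ M := by
  unfold filt
  refine Ideal.sum_mem _ ?_
  intro s _
  by_cases hC : C s
  · rw [if_pos hC]
    exact monomial_term_mem M hM f hf s
  · rw [if_neg hC]
    exact Submodule.zero_mem _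

end Aux

open Aux MvPolynomial in
/-- No point of `Y` lies strictly southeast of an upper inside corner. -/
lemma no_SE {m n : ℕ} {Y : Set (ℕ × ℕ)} (hY : StdLadder m n Y) {c d : ℕ}
    (hcd : IsUpperCorner Y (c, d)) :
    ∀ p q : ℕ, (p, q) ∈ Y → c < p → d < q → False := by
  obtain ⟨⟨_, hexch⟩, _⟩ := hY
  obtain ⟨_, hc1, hc2, hc3⟩ := hcd
  intro p q hpq hcp hdq
  have h1 := hexch (c + 1) d p q hc1 hpq (by omega) (by omega)
  have h2 := hexch c (d + 1) (c + 1) q hc2 h1.1 (by omega) (by omega)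
  exact hc3 h2.2

open Aux MvPolynomial in
/-- The filtered part of a member of the ideal of 2-minors is again a member,
because minor swaps preserve the NW-region weight. -/
lemma filt_mem_minorIdeal {m n : ℕ} (k : Type) [Field k] {Y : Set (ℕ × ℕ)}
    (hY : StdLadder m n Y) {c d : ℕ} (hcd : IsUpperCorner Y (c, d)) (e : ℕ)
    (f : MvPolynomial Y k) (hf : f ∈ minorIdeal k 2 Y) :
    filt (fun s => e ≤ nu c d s) f ∈ minorIdeal k 2 Y := by
  classical
  have key : ∀ g ∈ minorIdeal k 2 Y, ∀ p : MvPolynomial Y k,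
      filt (fun s => e ≤ nu c d s) (p * g) ∈ minorIdeal k 2 Y := by
    intro g hg
    refine Submodule.span_induction ?_ ?_ ?_ ?_ hg
    · rintro g' ⟨rr, cc, hrr, hcc, h, rfl⟩ p
      -- the four variables
      set a1 : Y := ⟨(rr 0, cc 0), h 0 0⟩
      set a4 : Y := ⟨(rr 1, cc 1), h 1 1⟩
      set a2 : Y := ⟨(rr 0, cc 1), h 0 1⟩
      set a3 : Y := ⟨(rr 1, cc 0), h 1 0⟩
      set su : Y →₀ ℕ := Finsupp.single a1 1 + Finsupp.single a4 1
      set sv : Y →₀ ℕ := Finsupp.single a2 1 + Finsupp.single a3 1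
      have hXX : ∀ x y : Y, (X x * X y : MvPolynomial Y k)
          = monomial (Finsupp.single x 1 + Finsupp.single y 1) 1 := by
        intro x y
        rw [← pow_one (X x : MvPolynomial Y k), ← pow_one (X y : MvPolynomial Y k),
          X_pow_eq_monomial, X_pow_eq_monomial, monomial_mul, one_mul]
      have hdet : minorPoly k rr cc h
          = monomial su (1 : k) - monomial sv (1 : k) := by
        unfold minorPoly
        rw [Matrix.det_fin_two]
        simp only [Matrix.of_apply]
        rw [hXX, hXX]
      have hr01 : rr 0 < rr 1 := hrr (by decide : (0 : Fin 2) < 1)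
      have hc01 : cc 0 < cc 1 := hcc (by decide : (0 : Fin 2) < 1)
      have hse : ¬ (c < rr 1 ∧ d < cc 1) := by
        rintro ⟨h1, h2⟩
        exact no_SE hY hcd (rr 1) (cc 1) (h 1 1) h1 h2
      have hnu : nu c d su = nu c d sv := by
        show nu c d (Finsupp.single a1 1 + Finsupp.single a4 1)
          = nu c d (Finsupp.single a2 1 + Finsupp.single a3 1)
        rw [nu_add, nu_add, nu_single, nu_single, nu_single, nu_single]
        show (if rr 0 ≤ c ∧ cc 0 ≤ d then 1 else 0) + (if rr 1 ≤ c ∧ cc 1 ≤ d then 1 else 0)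
          = (if rr 0 ≤ c ∧ cc 1 ≤ d then 1 else 0) + (if rr 1 ≤ c ∧ cc 0 ≤ d then 1 else 0)
        split_ifs <;> omega
      have hgmem : (monomial su (1 : k) - monomial sv (1 : k)) ∈ minorIdeal k 2 Y := by
        rw [← hdet]
        exact Ideal.subset_span ⟨rr, cc, hrr, hcc, h, rfl⟩
      rw [hdet, mul_sub, filt_sub, filt_mul_monomial, filt_mul_monomial]
      simp only [hnu]
      rw [← mul_sub]
      exact Ideal.mul_mem_left _ _ hgmem
    · intro p
      rw [mul_zero, filt_zero]
      exact Submodule.zero_mem _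
    · intro x y _ _ hx hy p
      rw [mul_add, filt_add]
      exact Submodule.add_mem _ (hx p) (hy p)
    · intro a x _ hx p
      rw [smul_eq_mul, ← mul_assoc]
      exact hx (p * a)
  have := key f hf 1
  rwa [one_mul] at this


/-- Let `Y` be a `2`-connected ladder, `π : k[Y] → R_2(Y)` the quotient
map, `P` the ideal of `k[Y]` generated by the variables `X_{pq}` with `(p,q) ∈ Y`,
`p ≤ c_j`, `q ≤ d_j`, for an upper inside corner `(c_j, d_j)`, and `J = P ^ e` with
`e ≥ 1`. Then for every monomial ideal `M` of `k[Y]` one has `π(J) ∩ π(M) = π(J ∩ M)`. -/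
theorem image_inter_P_pow (m n : ℕ) (k : Type) [Field k] (Y : Set (ℕ × ℕ))
    (hY : StdLadder m n Y) (hconn : TConnected m n 2 Y)
    (c d : ℕ) (hcd : IsUpperCorner Y (c, d))
    (P : Ideal (MvPolynomial Y k))
    (hP : P = Ideal.span {f | ∃ p q, ∃ h : (p, q) ∈ Y,
      p ≤ c ∧ q ≤ d ∧ f = MvPolynomial.X ⟨(p, q), h⟩})
    (e : ℕ) (he : 1 ≤ e)
    (M : Ideal (MvPolynomial Y k)) (hM : IsMonomialIdeal M)
    (π : MvPolynomial Y k →+* LadderRing k 2 Y)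
    (hπ : π = Ideal.Quotient.mk (minorIdeal k 2 Y)) :
    Ideal.map π (P ^ e) ⊓ Ideal.map π M = Ideal.map π (P ^ e ⊓ M) := by
  classical
  subst hπ
  set I := minorIdeal k 2 Y
  set π := Ideal.Quotient.mk I
  apply le_antisymm
  · -- the hard inclusion
    intro z hz
    obtain ⟨hz1, hz2⟩ := Ideal.mem_inf.mp hz
    rw [Ideal.mem_map_iff_of_surjective π Ideal.Quotient.mk_surjective] at hz1 hz2
    obtain ⟨a, ha, rfl⟩ := hz1
    obtain ⟨b, hb, hba⟩ := hz2
    have hg : a - b ∈ I := Ideal.Quotient.eq.mp hba.symm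
    set C : (Y →₀ ℕ) → Prop := fun s => e ≤ Aux.nu c d s with hC
    have h1 : Aux.filt C a = a :=
      Aux.filt_eq_self C a (Aux.mem_Ppow_supp c d P hP e a ha)
    have hsplit : a = Aux.filt C b + Aux.filt C (a - b) := by
      rw [Aux.filt_sub, h1]; ring
    have hb1 : Aux.filt C b ∈ P ^ e ⊓ M :=
      Ideal.mem_inf.mpr ⟨Aux.filt_mem_Ppow c d P hP e b,
        Aux.filt_mem_monomialIdeal C M hM b hb⟩
    have hb2 : Aux.filt C (a - b) ∈ I := filt_mem_minorIdeal k hY hcd e _ hg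
    have : π a = π (Aux.filt C b) := by
      rw [hsplit, map_add, Ideal.Quotient.eq_zero_iff_mem.mpr hb2, add_zero]
    rw [this]
    exact Ideal.mem_map_of_mem π hb1
  · exact le_inf (Ideal.map_mono inf_le_left) (Ideal.map_mono inf_le_right)

end LadderDet
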